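/- The subgroup of the symmetric group S_12 (acting on {0,...,11}) generated by the 12-cycle ζ = (0 1 2 ... 11) and the involution α = (1 5)(2 10)(4 8)(7 11) has order 24, contains ⟨ζ⟩ ≅ C_12 as a normal subgroup of index 2, and is isomorphic to a semidirect product C_12 ⋊ C_2. -/

import Mathlib

set_option maxRecDepth 100000
open Equiv
namespace Stmt3Aux
def zz : Equiv.Perm (Fin 12) := c[0, 1, 2, 3, 4, 5, 6, 7, 8, 9, 10, 11]
def aa : Equiv.Perm (Fin 12) := c[1, 5] * c[2, 10] * c[4, 8] * c[7, 11]

def f₁ : Multiplicative (ZMod 12) →* Perm (Fin 12) :=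
  ⟨⟨fun n => zz ^ (Multiplicative.toAdd n).val, by decide⟩, by decide⟩
def f₂ : Multiplicative (ZMod 2) →* Perm (Fin 12) :=
  ⟨⟨fun n => aa ^ (Multiplicative.toAdd n).val, by decide⟩, by decide⟩
end Stmt3Aux
namespace Stmt3Aux
lemma hx25 : ∀ x : Multiplicative (ZMod 12), x ^ 25 = x := by decide

def a : MulAut (Multiplicative (ZMod 12)) :=
{ toFun := fun x => x ^ 5, invFun := fun x => x ^ 5,
  left_inv := fun x => by show (x ^ 5) ^ 5 = x; rw [← pow_mul]; exact hx25 x,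
  right_inv := fun x => by show (x ^ 5) ^ 5 = x; rw [← pow_mul]; exact hx25 x,
  map_mul' := fun x y => mul_pow x y 5 }

lemma ha2 : a * a = 1 := by
  ext x
  show ((x : Multiplicative (ZMod 12)) ^ 5) ^ 5 = x
  rw [← pow_mul]; exact hx25 x

def φ : Multiplicative (ZMod 2) →* MulAut (Multiplicative (ZMod 12)) :=
{ toFun := fun h => a ^ (Multiplicative.toAdd h).val,
  map_one' := pow_zero a,
  map_mul' := by
    intro x y
    have hx : Multiplicative.toAdd x = 0 ∨ Multiplicative.toAdd x = 1 := by
      revert x; decide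
    have hy : Multiplicative.toAdd y = 0 ∨ Multiplicative.toAdd y = 1 := by
      revert y; decide
    show a ^ (Multiplicative.toAdd x + Multiplicative.toAdd y).val =
      a ^ (Multiplicative.toAdd x).val * a ^ (Multiplicative.toAdd y).val
    rcases hx with hx | hx <;> rcases hy with hy | hy <;> rw [hx, hy]
    · rfl
    · rfl
    · rfl
    · show a ^ (0 : ZMod 2).val = a ^ (1 : ZMod 2).val * a ^ (1 : ZMod 2).val
      show a ^ 0 = a ^ 1 * a ^ 1
      rw [pow_zero, pow_one, ha2] }
end Stmt3Aux
namespace Stmt3Aux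
lemma hcomp : ∀ g : Multiplicative (ZMod 2),
    f₁.comp (φ g).toMonoidHom = (MulAut.conj (f₂ g)).toMonoidHom.comp f₁ := by
  have key : ∀ (g : Multiplicative (ZMod 2)) (x : Multiplicative (ZMod 12)),
      f₁ (φ g x) = f₂ g * f₁ x * (f₂ g)⁻¹ := by decide
  intro g
  exact MonoidHom.ext fun x => by simpa [MulAut.conj_apply] using key g x
end Stmt3Aux
namespace Stmt3Aux
def ψ : (Multiplicative (ZMod 12) ⋊[φ] Multiplicative (ZMod 2)) →* Perm (Fin 12) :=
  SemidirectProduct.lift f₁ f₂ hcomp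

lemma ψ_mk (n : Multiplicative (ZMod 12)) (h : Multiplicative (ZMod 2)) :
    ψ ⟨n, h⟩ = f₁ n * f₂ h := by
  rw [SemidirectProduct.mk_eq_inl_mul_inr, map_mul, ψ]
  rw [SemidirectProduct.lift_inl, SemidirectProduct.lift_inr]

lemma hinj : Function.Injective ψ := by
  rw [injective_iff_map_eq_one]
  rintro ⟨n, h⟩ hx
  rw [ψ_mk] at hx
  have key2 : ∀ (n : Multiplicative (ZMod 12)) (h : Multiplicative (ZMod 2)),
      f₁ n * f₂ h = 1 → n = 1 ∧ h = 1 := by decide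
  obtain ⟨hn, hh⟩ := key2 n h hx
  ext
  · exact hn
  · exact hh
end Stmt3Aux
namespace Stmt3Aux
def G' : Subgroup (Perm (Fin 12)) := Subgroup.closure {zz, aa}

lemma hzzG : zz ∈ G' := Subgroup.subset_closure (Set.mem_insert _ _)
lemma haaG : aa ∈ G' := Subgroup.subset_closure (Set.mem_insert_of_mem _ rfl)

lemma hrange : ψ.range = G' := by
  apply le_antisymm
  · rintro y ⟨⟨n, h⟩, rfl⟩
    rw [ψ_mk]
    exact mul_mem (pow_mem hzzG _) (pow_mem haaG _)
  · rw [G']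
    rw [Subgroup.closure_le]
    rintro x (rfl | rfl)
    · refine ⟨SemidirectProduct.inl (Multiplicative.ofAdd 1), ?_⟩
      rw [ψ, SemidirectProduct.lift_inl]
      show zz ^ (1 : ZMod 12).val = zz
      decide
    · refine ⟨SemidirectProduct.inr (Multiplicative.ofAdd 1), ?_⟩
      rw [ψ, SemidirectProduct.lift_inr]
      show aa ^ (1 : ZMod 2).val = aa
      decide
end Stmt3Aux
namespace Stmt3Aux
noncomputable def e : G' ≃* (Multiplicative (ZMod 12) ⋊[φ] Multiplicative (ZMod 2)) :=
  (MulEquiv.subgroupCongr hrange.symm).trans (MonoidHom.ofInjective hinj).symm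

def sdpEquivProd : (Multiplicative (ZMod 12) ⋊[φ] Multiplicative (ZMod 2)) ≃
    (ZMod 12) × (ZMod 2) :=
  ⟨fun x => (Multiplicative.toAdd x.left, Multiplicative.toAdd x.right),
   fun p => ⟨Multiplicative.ofAdd p.1, Multiplicative.ofAdd p.2⟩,
   fun _ => rfl, fun _ => rfl⟩

lemma cardG : Nat.card G' = 24 := by
  rw [Nat.card_congr (e.toEquiv.trans sdpEquivProd)]
  rw [Nat.card_prod, Nat.card_zmod, Nat.card_zmod]

lemma orderzz : orderOf zz = 12 := by
  rw [orderOf_eq_iff (by norm_num)]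
  exact ⟨by decide, by decide⟩

def H' : Subgroup (Perm (Fin 12)) := Subgroup.zpowers zz

lemma hHG : H' ≤ G' := Subgroup.zpowers_le.mpr hzzG

lemma cardH : Nat.card H' = 12 := by rw [H', Nat.card_zpowers, orderzz]

lemma haainv : aa⁻¹ = aa := by decide

lemma hGnorm : G' ≤ Subgroup.normalizer (H' : Set (Perm (Fin 12))) := by
  rw [G', Subgroup.closure_le]
  have fwd : ∀ h ∈ H', aa * h * aa⁻¹ ∈ H' := by
    rintro _ ⟨k, rfl⟩
    have hc : aa * zz * aa⁻¹ = zz ^ (5 : ℤ) := by decide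
    rw [← conj_zpow, hc, ← zpow_mul]
    exact zpow_mem (Subgroup.mem_zpowers zz) _
  rintro x (rfl | rfl)
  · exact Subgroup.le_normalizer (Subgroup.mem_zpowers zz)

  · show aa ∈ Subgroup.normalizer (H' : Set (Perm (Fin 12)))
    rw [Subgroup.mem_normalizer_iff]
    intro h
    constructor
    · exact fun hh => fwd h hh
    · intro hh
      have := fwd _ hh
      rwa [haainv, show aa * (aa * h * aa) * aa = h by
        have h2 : aa * aa = 1 := by decide
        rw [show aa * (aa * h * aa) * aa = (aa * aa) * h * (aa * aa) by group, h2,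
          one_mul, mul_one]] at this

lemma hNormal : (H'.subgroupOf G').Normal := by
  constructor
  intro n hn g
  rw [Subgroup.mem_subgroupOf] at hn ⊢
  exact (Subgroup.mem_normalizer_iff.mp (hGnorm g.2) _).mp hn

lemma hindex : (H'.subgroupOf G').index = 2 := by
  have h1 : Nat.card (H'.subgroupOf G') = 12 := by
    rw [Nat.card_congr (Subgroup.subgroupOfEquivOfLe hHG).toEquiv, cardH]
  have h2 := Subgroup.card_mul_index (H'.subgroupOf G')
  rw [h1, cardG] at h2
  omega
end Stmt3Aux

/-- Aut(M₁): the group generated by the 12-cycle ζ and the involution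
α = (1 5)(2 10)(4 8)(7 11) has order 24, contains ⟨ζ⟩ ≅ C₁₂ as a normal
subgroup of index 2, and is a semidirect product C₁₂ ⋊ C₂. -/
theorem stmt_3 :
    let ζ : Equiv.Perm (Fin 12) := c[0, 1, 2, 3, 4, 5, 6, 7, 8, 9, 10, 11]
    let α : Equiv.Perm (Fin 12) := c[1, 5] * c[2, 10] * c[4, 8] * c[7, 11]
    let G : Subgroup (Equiv.Perm (Fin 12)) := Subgroup.closure {ζ, α}
    let H : Subgroup (Equiv.Perm (Fin 12)) := Subgroup.zpowers ζ
    Nat.card G = 24 ∧ H ≤ G ∧ Nat.card H = 12 ∧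
    (H.subgroupOf G).Normal ∧ (H.subgroupOf G).index = 2 ∧
    ∃ φ : Multiplicative (ZMod 2) →* MulAut (Multiplicative (ZMod 12)),
      Nonempty (G ≃* Multiplicative (ZMod 12) ⋊[φ] Multiplicative (ZMod 2)) := by
  intro ζ α G H
  exact ⟨Stmt3Aux.cardG, Stmt3Aux.hHG, Stmt3Aux.cardH, Stmt3Aux.hNormal,
    Stmt3Aux.hindex, Stmt3Aux.φ, ⟨Stmt3Aux.e⟩⟩
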